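/- For every y = (y₁,y₂,y₃) ∈ 𝒰, the potential function S is twice complex differentiable at y and its holomorphic Hessian, the matrix of second partial derivatives (∂²S/∂y_j∂y_k)_{j,k∈{1,2,3}}(y), equals 2iQ + i·diag(-1/(1+e^{-y₁}), 1/(1+e^{-y₂}), -3/(1+e^{-y₃})). -/

import Mathlib

open Real

/-- The dilogarithm `Li₂(z) = -∫₀¹ Log(1 - z t)/t dt`. -/
noncomputable def Li2 (z : ℂ) : ℂ :=
  -∫ t in (0:ℝ)..1, Complex.log (1 - z * (t : ℂ)) / (t : ℂ)

lemma ofReal_hasDerivAt {t : ℝ} : HasDerivAt (fun s : ℝ => (s : ℂ)) 1 t := by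
  simpa using (hasDerivAt_id t).ofReal_comp

lemma affine_hasDerivAt (z : ℂ) (t : ℝ) :
    HasDerivAt (fun s : ℝ => (1 : ℂ) - z * s) (-z) t := by
  simpa using ((ofReal_hasDerivAt (t := t)).const_mul z).const_sub 1

lemma slit_of_im (z : ℂ) (hz : z.im ≠ 0) {t : ℝ} (ht : t ∈ Set.Icc (0:ℝ) 1) :
    (1 : ℂ) - z * t ∈ Complex.slitPlane := by
  rcases eq_or_lt_of_le ht.1 with h | h
  · simp [Complex.mem_slitPlane_iff, ← h]
  · refine Or.inr ?_
    simp only [Complex.sub_im, Complex.one_im, Complex.mul_im, Complex.ofReal_re,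
      Complex.ofReal_im, mul_zero, add_zero, zero_sub, neg_ne_zero]
    simpa using mul_ne_zero hz (ne_of_gt h)

lemma integral_inv_affine (z : ℂ) (hz : z.im ≠ 0) :
    ∫ t in (0:ℝ)..1, -((1 : ℂ) - z * t)⁻¹ = Complex.log (1 - z) / z := by
  have hne : ∀ t ∈ Set.Icc (0:ℝ) 1, (1 : ℂ) - z * t ≠ 0 := fun t ht =>
    Complex.slitPlane_ne_zero (slit_of_im z hz ht)
  have hz0 : z ≠ 0 := fun h => hz (by simp [h])
  have hderiv : ∀ t ∈ Set.uIcc (0:ℝ) 1,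
      HasDerivAt (fun s : ℝ => Complex.log (1 - z * s) / z) (-((1 : ℂ) - z * t)⁻¹) t := by
    intro t ht
    rw [Set.uIcc_of_le (by norm_num)] at ht
    have h1 := (affine_hasDerivAt z t).clog_real (slit_of_im z hz ht)
    have := h1.div_const z
    refine this.congr_deriv ?_
    rw [div_div, mul_comm (1 - z * (t:ℂ)) z, show -z = z * (-1) by ring, mul_div_mul_left _ _ hz0,
      neg_div, one_div]
  have hcont : IntervalIntegrable (fun t : ℝ => -((1 : ℂ) - z * t)⁻¹) MeasureTheory.volume 0 1 := by
    apply ContinuousOn.intervalIntegrable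
    rw [Set.uIcc_of_le (by norm_num)]
    exact (((continuous_const.sub (continuous_const.mul Complex.continuous_ofReal)).continuousOn).inv₀
      hne).neg
  have := intervalIntegral.integral_eq_sub_of_hasDerivAt hderiv hcont
  rw [this]
  simp [Complex.log_one]

lemma li2_hasDerivAt (z : ℂ) (hz : z.im ≠ 0) :
    HasDerivAt Li2 (-Complex.log (1 - z) / z) z := by
  have hδ : 0 < |z.im| / 2 := half_pos (abs_pos.mpr hz)
  set δ : ℝ := |z.im| / 2 with hδdef
  set M : ℝ := ‖z‖ + δ with hMdef
  clear_value M
  clear_value δ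
  have hM0 : 0 ≤ M := by rw [hMdef]; positivity
  have hM : 0 < δ + M := by positivity
  have hball : ∀ w ∈ Metric.ball z δ, δ ≤ |w.im| := by
    intro w hw
    have h1 : |(w - z).im| ≤ ‖w - z‖ := by
      simpa using Complex.abs_im_le_norm (w - z)
    have h2 : ‖w - z‖ < δ := by simpa [dist_eq_norm] using hw
    have h3 : |z.im| - |w.im| ≤ |(w - z).im| := by
      have := abs_sub_abs_le_abs_sub z.im w.im
      simpa [Complex.sub_im, abs_sub_comm] using this
    have h4 : |z.im| = 2 * δ := by rw [hδdef]; ring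
    linarith
  have hballM : ∀ w ∈ Metric.ball z δ, ‖w‖ ≤ M := by
    intro w hw
    have h2 : ‖w - z‖ < δ := by simpa [dist_eq_norm] using hw
    have := norm_sub_norm_le w z
    rw [hMdef]; linarith
  have hlow : ∀ w ∈ Metric.ball z δ, ∀ t ∈ Set.Ioc (0:ℝ) 1,
      δ / (δ + M) ≤ ‖(1 : ℂ) - w * t‖ := by
    intro w hw t ht
    rcases le_or_gt t ((δ + M)⁻¹) with h | h
    · have h1 : ‖w * (t:ℂ)‖ ≤ M * t := by
        rw [norm_mul, Complex.norm_real, Real.norm_eq_abs, abs_of_pos ht.1]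
        exact mul_le_mul_of_nonneg_right (hballM w hw) ht.1.le
      have h2 : ‖(1:ℂ)‖ - ‖w * (t:ℂ)‖ ≤ ‖(1:ℂ) - w * t‖ := norm_sub_norm_le _ _
      have h3 : M * t ≤ M * (δ + M)⁻¹ :=
        mul_le_mul_of_nonneg_left h (by positivity)
      have h4 : δ / (δ + M) = 1 - M * (δ + M)⁻¹ := by field_simp; ring
      have h5 : ‖(1:ℂ)‖ = 1 := norm_one
      nlinarith
    · have h1 : |((1:ℂ) - w * t).im| = |w.im| * t := by
        simp [Complex.sub_im, Complex.mul_im, abs_mul, abs_of_pos ht.1]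
      have h2 : |((1:ℂ) - w * t).im| ≤ ‖(1:ℂ) - w * t‖ := by
        simpa using Complex.abs_im_le_norm ((1:ℂ) - w * t)
      have h3 : δ * (δ + M)⁻¹ ≤ |w.im| * t := by
        have := mul_le_mul (hball w hw) h.le (by positivity) (abs_nonneg _)
        linarith
      have h4 : δ / (δ + M) = δ * (δ + M)⁻¹ := div_eq_mul_inv _ _
      linarith
  have key := intervalIntegral.hasDerivAt_integral_of_dominated_loc_of_deriv_le
    (μ := MeasureTheory.volume) (a := (0:ℝ)) (b := 1) (x₀ := z)
    (F := fun w t => Complex.log (1 - w * t) / t)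
    (F' := fun w t => -((1 : ℂ) - w * t)⁻¹)
    (bound := fun _ => (δ + M) / δ) (Metric.ball_mem_nhds z hδ)
    ?_ ?_ ?_ ?_ ?_ ?_
  · have hInt := integral_inv_affine z hz
    have h2 := key.2
    rw [show Li2 = fun w => -∫ t in (0:ℝ)..1, Complex.log (1 - w * (t:ℝ)) / (t:ℝ) from rfl]
    refine h2.neg.congr_deriv ?_
    rw [hInt, neg_div]
  · refine Filter.Eventually.of_forall (fun x => ?_)
    exact ((Complex.measurable_log.comp (measurable_const.sub
      (measurable_const.mul Complex.continuous_ofReal.measurable))).div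
      Complex.continuous_ofReal.measurable).aestronglyMeasurable
  · -- integrability of F z
    rw [intervalIntegrable_iff]
    have hGc : ContinuousOn (fun t : ℝ => Complex.log (1 - z * t)) (Set.Icc 0 1) := by
      intro t ht
      exact (((continuous_const.sub (continuous_const.mul
        Complex.continuous_ofReal)).continuousAt).clog
        (slit_of_im z hz ht)).continuousWithinAt
    obtain ⟨M₁, hM₁⟩ := (isCompact_Icc).exists_bound_of_continuousOn hGc
    have hM₁0 : 0 ≤ M₁ := le_trans (norm_nonneg _) (hM₁ 0 ⟨le_refl _, zero_le_one⟩)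
    have hr : (0:ℝ) < (2 * (‖z‖ + 1))⁻¹ := by positivity
    set r : ℝ := (2 * (‖z‖ + 1))⁻¹ with hrdef
    set C : ℝ := max (3 / 2 * ‖z‖) (M₁ * (2 * (‖z‖ + 1))) with hCdef
    rw [Set.uIoc_of_le (zero_le_one)]
    apply MeasureTheory.Integrable.mono' (g := fun _ => C)
      (MeasureTheory.integrableOn_const (C := C) measure_Ioc_lt_top.ne)
    · exact ((Complex.measurable_log.comp (measurable_const.sub
        (measurable_const.mul Complex.continuous_ofReal.measurable))).div
        Complex.continuous_ofReal.measurable).aestronglyMeasurable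
    · rw [MeasureTheory.ae_restrict_iff' measurableSet_Ioc]
      refine Filter.Eventually.of_forall (fun t ht => ?_)
      have ht0 : (0:ℝ) < t := ht.1
      have hnorm : ‖Complex.log (1 - z * t) / t‖ = ‖Complex.log (1 - z * t)‖ / t := by
        rw [norm_div, Complex.norm_real, Real.norm_eq_abs, abs_of_pos ht0]
      rw [hnorm]
      rcases le_or_gt t r with h | h
      · have hhalf : (‖z‖ + 1) * r ≤ 1 / 2 := by
          rw [hrdef]
          have heq2 : (‖z‖ + 1) * (2 * (‖z‖ + 1))⁻¹ = 1 / 2 := by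
            field_simp
          exact le_of_eq heq2
        have hval : ‖-(z * (t:ℂ))‖ = ‖z‖ * t := by
          rw [norm_neg, norm_mul, Complex.norm_real, Real.norm_eq_abs, abs_of_pos ht0]
        have hzt : ‖-(z * (t:ℂ))‖ ≤ 1 / 2 := by
          rw [hval]
          calc ‖z‖ * t ≤ (‖z‖ + 1) * r := by
                apply mul_le_mul (by linarith) h ht0.le (by positivity)
            _ ≤ 1 / 2 := hhalf
        have hlog := Complex.norm_log_one_add_half_le_self hzt
        have heq : (1:ℂ) - z * t = 1 + -(z * t) := by ring
        rw [heq, div_le_iff₀ ht0]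
        have hCl : 3 / 2 * ‖z‖ ≤ C := le_max_left _ _
        rw [hval] at hlog
        nlinarith
      · rw [div_le_iff₀ ht0]
        have h5 : ‖Complex.log (1 - z * t)‖ ≤ M₁ := hM₁ t ⟨ht0.le, ht.2⟩
        have hCl : M₁ * (2 * (‖z‖ + 1)) ≤ C := le_max_right _ _
        have h6 : 1 < 2 * (‖z‖ + 1) * t := by
          have h7 := mul_lt_mul_of_pos_left h (show (0:ℝ) < 2 * (‖z‖ + 1) by positivity)
          rwa [mul_inv_cancel₀ (by positivity)] at h7
        nlinarith
  · exact ((measurable_const.sub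
      (measurable_const.mul Complex.continuous_ofReal.measurable)).inv.neg).aestronglyMeasurable
  · refine Filter.Eventually.of_forall (fun t ht x hx => ?_)
    rw [Set.uIoc_of_le (zero_le_one)] at ht
    have hl := hlow x hx t ht
    have hpos : 0 < δ / (δ + M) := by positivity
    rw [norm_neg, norm_inv]
    calc ‖(1:ℂ) - x * t‖⁻¹ ≤ (δ / (δ + M))⁻¹ := inv_anti₀ hpos hl
      _ = (δ + M) / δ := by rw [inv_div]
  · exact intervalIntegrable_const
  · refine Filter.Eventually.of_forall (fun t ht x hx => ?_)
    rw [Set.uIoc_of_le (zero_le_one)] at ht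
    have hx_im : x.im ≠ 0 := by
      have := hball x hx
      intro hc
      rw [hc] at this
      simp at this
      linarith
    have hslit : (1:ℂ) - x * t ∈ Complex.slitPlane := by
      refine Or.inr ?_
      simp only [Complex.sub_im, Complex.one_im, Complex.mul_im, Complex.ofReal_re,
        Complex.ofReal_im, mul_zero, add_zero, zero_add, zero_sub, neg_ne_zero]
      exact mul_ne_zero hx_im (ne_of_gt ht.1)
    have h0 : HasDerivAt (fun w : ℂ => (1:ℂ) - w * t) (-(t:ℂ)) x := by
      simpa using (hasDerivAt_mul_const ((t:ℝ):ℂ)).const_sub (1:ℂ)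
    have h1 := (h0.clog hslit).div_const ((t:ℝ):ℂ)
    refine h1.congr_deriv ?_
    have htne : ((t:ℝ):ℂ) ≠ 0 := by exact_mod_cast ne_of_gt ht.1
    rw [div_div, show -((t:ℝ):ℂ) = ((t:ℝ):ℂ) * (-1) by ring,
      mul_comm ((1:ℂ) - x * t) ((t:ℝ):ℂ), mul_div_mul_left _ _ htne, neg_div, one_div]

lemma exp_im_ne (y : ℂ) (hy : Real.sin y.im ≠ 0) : (Complex.exp y).im ≠ 0 := by
  rw [Complex.exp_im]
  exact mul_ne_zero (ne_of_gt (Real.exp_pos _)) hy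

lemma one_add_exp_ne (y : ℂ) (hy : Real.sin y.im ≠ 0) : (1:ℂ) + Complex.exp y ≠ 0 := by
  intro hc
  have him : ((1:ℂ) + Complex.exp y).im = 0 := by rw [hc]; simp
  rw [Complex.add_im, Complex.one_im, zero_add] at him
  exact exp_im_ne y hy him

lemma one_add_exp_slit (y : ℂ) (hy : Real.sin y.im ≠ 0) :
    (1:ℂ) + Complex.exp y ∈ Complex.slitPlane := by
  refine Or.inr ?_
  rw [Complex.add_im, Complex.one_im, zero_add]
  exact exp_im_ne y hy

lemma key_frac (y : ℂ) (hy : Real.sin y.im ≠ 0) :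
    Complex.exp y / (1 + Complex.exp y) = 1 / (1 + Complex.exp (-y)) := by
  have h1 : (1:ℂ) + Complex.exp y ≠ 0 := one_add_exp_ne y hy
  have h2 : (1:ℂ) + Complex.exp (-y) ≠ 0 := by
    have : Real.sin (-y).im ≠ 0 := by
      rw [Complex.neg_im, Real.sin_neg]
      exact neg_ne_zero.mpr hy
    exact one_add_exp_ne (-y) this
  field_simp
  rw [mul_add, mul_one, ← Complex.exp_add]
  simp [add_comm]

lemma li2_exp_hasDerivAt (y : ℂ) (hy : Real.sin y.im ≠ 0) :
    HasDerivAt (fun z => Li2 (-Complex.exp z)) (-Complex.log (1 + Complex.exp y)) y := by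
  have him : (-Complex.exp y).im ≠ 0 := by
    rw [Complex.neg_im]
    exact neg_ne_zero.mpr (exp_im_ne y hy)
  have h1 := li2_hasDerivAt (-Complex.exp y) him
  have h2 : HasDerivAt (fun z => -Complex.exp z) (-Complex.exp y) y :=
    (Complex.hasDerivAt_exp y).neg
  have h3 := h1.comp y h2
  refine h3.congr_deriv ?_
  have hne : -Complex.exp y ≠ 0 := neg_ne_zero.mpr (Complex.exp_ne_zero y)
  rw [sub_neg_eq_add, div_mul_cancel₀ _ hne]

lemma log_one_add_exp_hasDerivAt (y : ℂ) (hy : Real.sin y.im ≠ 0) :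
    HasDerivAt (fun z => Complex.log (1 + Complex.exp z))
      (Complex.exp y / (1 + Complex.exp y)) y := by
  have h0 : HasDerivAt (fun z : ℂ => (1:ℂ) + Complex.exp z) (Complex.exp y) y :=
    (Complex.hasDerivAt_exp y).const_add 1
  exact h0.clog (one_add_exp_slit y hy)

/-- The potential function `S`. -/
noncomputable def pot (y₁ y₂ y₃ : ℂ) : ℂ :=
  Complex.I * (y₁ ^ 2 - y₁ * y₂ + y₂ * y₃ + y₃ ^ 2 / 2) +
    (-(π : ℂ) * y₁ + (π : ℂ) * y₃) +
    Complex.I * Li2 (-Complex.exp y₁) - Complex.I * Li2 (-Complex.exp y₂) +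
    3 * Complex.I * Li2 (-Complex.exp y₃)

lemma d1 (y₁ y₂ y₃ : ℂ) (h : Real.sin y₁.im ≠ 0) :
    HasDerivAt (fun z => pot z y₂ y₃)
      (Complex.I * (2 * y₁ - y₂) - (π : ℂ) -
        Complex.I * Complex.log (1 + Complex.exp y₁)) y₁ := by
  have hquad : HasDerivAt (fun z : ℂ => z ^ 2 - z * y₂ + y₂ * y₃ + y₃ ^ 2 / 2)
      (2 * y₁ - y₂) y₁ := by
    have hsq : HasDerivAt (fun z : ℂ => z ^ 2) (2 * y₁) y₁ := by
      simpa using hasDerivAt_pow 2 y₁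
    simpa using ((hsq.sub (hasDerivAt_mul_const y₂)).add_const (y₂ * y₃)).add_const (y₃ ^ 2 / 2)
  have hT1 := hquad.const_mul Complex.I
  have hT2 : HasDerivAt (fun z : ℂ => -(π : ℂ) * z + (π : ℂ) * y₃) (-(π : ℂ)) y₁ := by
    simpa using ((hasDerivAt_id y₁).const_mul (-(π : ℂ))).add_const ((π : ℂ) * y₃)
  have hT3 := (li2_exp_hasDerivAt y₁ h).const_mul Complex.I
  have htot := (((hT1.add hT2).add hT3).sub_const
      (Complex.I * Li2 (-Complex.exp y₂))).add_const
      (3 * Complex.I * Li2 (-Complex.exp y₃))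
  have : HasDerivAt (fun z => pot z y₂ y₃)
      (Complex.I * (2 * y₁ - y₂) + -(π : ℂ) +
        Complex.I * -Complex.log (1 + Complex.exp y₁)) y₁ := htot
  convert this using 1
  ring

lemma d2 (y₁ y₂ y₃ : ℂ) (h : Real.sin y₂.im ≠ 0) :
    HasDerivAt (fun z => pot y₁ z y₃)
      (Complex.I * (y₃ - y₁) + Complex.I * Complex.log (1 + Complex.exp y₂)) y₂ := by
  have hquad : HasDerivAt (fun z : ℂ => y₁ ^ 2 - y₁ * z + z * y₃ + y₃ ^ 2 / 2)
      (-y₁ + y₃) y₂ := by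
    have ha : HasDerivAt (fun z : ℂ => y₁ ^ 2 - y₁ * z) (-y₁) y₂ := by
      simpa using ((hasDerivAt_id y₂).const_mul y₁).const_sub (y₁ ^ 2)
    simpa using ((ha.add (hasDerivAt_mul_const y₃)).add_const (y₃ ^ 2 / 2))
  have hT1 := (hquad.const_mul Complex.I).add_const (-(π : ℂ) * y₁ + (π : ℂ) * y₃)
  have hT13 := hT1.add_const (Complex.I * Li2 (-Complex.exp y₁))
  have hT4 := (li2_exp_hasDerivAt y₂ h).const_mul Complex.I
  have htot := (hT13.sub hT4).add_const (3 * Complex.I * Li2 (-Complex.exp y₃))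
  have : HasDerivAt (fun z => pot y₁ z y₃)
      (Complex.I * (-y₁ + y₃) - Complex.I * -Complex.log (1 + Complex.exp y₂)) y₂ := htot
  convert this using 1
  ring

lemma d3 (y₁ y₂ y₃ : ℂ) (h : Real.sin y₃.im ≠ 0) :
    HasDerivAt (fun z => pot y₁ y₂ z)
      (Complex.I * (y₂ + y₃) + (π : ℂ) -
        3 * Complex.I * Complex.log (1 + Complex.exp y₃)) y₃ := by
  have hquad : HasDerivAt (fun z : ℂ => y₁ ^ 2 - y₁ * y₂ + y₂ * z + z ^ 2 / 2)
      (y₂ + y₃) y₃ := by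
    have ha : HasDerivAt (fun z : ℂ => y₁ ^ 2 - y₁ * y₂ + y₂ * z) y₂ y₃ := by
      simpa using ((hasDerivAt_id y₃).const_mul y₂).const_add (y₁ ^ 2 - y₁ * y₂)
    have hb : HasDerivAt (fun z : ℂ => z ^ 2 / 2) y₃ y₃ := by
      have : HasDerivAt (fun z : ℂ => z ^ 2) (2 * y₃) y₃ := by
        simpa using hasDerivAt_pow 2 y₃
      have h2 := this.div_const 2
      refine h2.congr_deriv ?_
      ring
    exact ha.add hb
  have hlin : HasDerivAt (fun z : ℂ => -(π : ℂ) * y₁ + (π : ℂ) * z) ((π : ℂ)) y₃ := by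
    simpa using ((hasDerivAt_id y₃).const_mul ((π : ℂ))).const_add (-(π : ℂ) * y₁)
  have hT1 := (hquad.const_mul Complex.I).add hlin
  have hT13 := (hT1.add_const (Complex.I * Li2 (-Complex.exp y₁))).sub_const
      (Complex.I * Li2 (-Complex.exp y₂))
  have hT5 := (li2_exp_hasDerivAt y₃ h).const_mul (3 * Complex.I)
  have htot := hT13.add hT5
  have : HasDerivAt (fun z => pot y₁ y₂ z)
      (Complex.I * (y₂ + y₃) + (π : ℂ) +
        3 * Complex.I * -Complex.log (1 + Complex.exp y₃)) y₃ := htot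
  convert this using 1
  ring
/-- on `𝒰`, the potential `S` is twice complex differentiable and
its holomorphic Hessian `(∂²S/∂y_j∂y_k)` equals
`2iQ + i·diag(-1/(1+e^{-y₁}), 1/(1+e^{-y₂}), -3/(1+e^{-y₃}))`. -/
theorem pot_hessian (y₁ y₂ y₃ : ℂ)
    (h₁ : y₁.im ∈ Set.Ioo (-π) 0) (h₂ : y₂.im ∈ Set.Ioo 0 π)
    (h₃ : y₃.im ∈ Set.Ioo (-π) 0) :
    -- first-order differentiability in each variable
    (DifferentiableAt ℂ (fun z => pot z y₂ y₃) y₁ ∧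
     DifferentiableAt ℂ (fun z => pot y₁ z y₃) y₂ ∧
     DifferentiableAt ℂ (fun z => pot y₁ y₂ z) y₃) ∧
    -- (1,1) entry: 2i·Q₁₁ + i·(-1/(1+e^{-y₁})) = 2i - i/(1+e^{-y₁})
    HasDerivAt (fun w => deriv (fun z => pot z y₂ y₃) w)
      (2 * Complex.I - Complex.I / (1 + Complex.exp (-y₁))) y₁ ∧
    -- (1,2) entry: 2i·Q₁₂ = -i
    HasDerivAt (fun w => deriv (fun z => pot z w y₃) y₁) (-Complex.I) y₂ ∧
    -- (1,3) entry: 0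
    HasDerivAt (fun w => deriv (fun z => pot z y₂ w) y₁) 0 y₃ ∧
    -- (2,1) entry: -i
    HasDerivAt (fun w => deriv (fun z => pot w z y₃) y₂) (-Complex.I) y₁ ∧
    -- (2,2) entry: 2i·Q₂₂ + i/(1+e^{-y₂}) = i/(1+e^{-y₂})
    HasDerivAt (fun w => deriv (fun z => pot y₁ z y₃) w)
      (Complex.I / (1 + Complex.exp (-y₂))) y₂ ∧
    -- (2,3) entry: i
    HasDerivAt (fun w => deriv (fun z => pot y₁ z w) y₂) Complex.I y₃ ∧
    -- (3,1) entry: 0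
    HasDerivAt (fun w => deriv (fun z => pot w y₂ z) y₃) 0 y₁ ∧
    -- (3,2) entry: i
    HasDerivAt (fun w => deriv (fun z => pot y₁ w z) y₃) Complex.I y₂ ∧
    -- (3,3) entry: 2i·Q₃₃ - 3i/(1+e^{-y₃}) = i - 3i/(1+e^{-y₃})
    HasDerivAt (fun w => deriv (fun z => pot y₁ y₂ z) w)
      (Complex.I - 3 * Complex.I / (1 + Complex.exp (-y₃))) y₃ := by
  have hs1 : Real.sin y₁.im ≠ 0 := ne_of_lt (Real.sin_neg_of_neg_of_neg_pi_lt h₁.2 h₁.1)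
  have hs2 : Real.sin y₂.im ≠ 0 := ne_of_gt (Real.sin_pos_of_pos_of_lt_pi h₂.1 h₂.2)
  have hs3 : Real.sin y₃.im ≠ 0 := ne_of_lt (Real.sin_neg_of_neg_of_neg_pi_lt h₃.2 h₃.1)
  have hopen : IsOpen {w : ℂ | Real.sin w.im ≠ 0} :=
    isOpen_compl_singleton.preimage (Real.continuous_sin.comp Complex.continuous_im)
  refine ⟨⟨(d1 y₁ y₂ y₃ hs1).differentiableAt, (d2 y₁ y₂ y₃ hs2).differentiableAt,
    (d3 y₁ y₂ y₃ hs3).differentiableAt⟩, ?_, ?_, ?_, ?_, ?_, ?_, ?_, ?_, ?_⟩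
  · -- (1,1)
    have hev : ∀ᶠ w in nhds y₁, Real.sin w.im ≠ 0 := hopen.mem_nhds hs1
    have heq : (fun w => deriv (fun z => pot z y₂ y₃) w) =ᶠ[nhds y₁]
        (fun w => Complex.I * (2 * w - y₂) - (π : ℂ) -
          Complex.I * Complex.log (1 + Complex.exp w)) := by
      filter_upwards [hev] with w hw
      exact (d1 w y₂ y₃ hw).deriv
    have ha : HasDerivAt (fun w : ℂ => Complex.I * (2 * w - y₂)) (2 * Complex.I) y₁ := by
      have h0 : HasDerivAt (fun w : ℂ => 2 * w - y₂) 2 y₁ := by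
        simpa using ((hasDerivAt_id y₁).const_mul (2 : ℂ)).sub_const y₂
      have := h0.const_mul Complex.I
      refine this.congr_deriv ?_
      ring
    have hb := (log_one_add_exp_hasDerivAt y₁ hs1).const_mul Complex.I
    have hg := (ha.sub_const (π : ℂ)).sub hb
    refine HasDerivAt.congr_of_eventuallyEq ?_ heq
    refine hg.congr_deriv ?_
    rw [key_frac y₁ hs1]
    ring
  · -- (1,2)
    have hfun : (fun w => deriv (fun z => pot z w y₃) y₁) =
        fun w => Complex.I * (2 * y₁ - w) - (π : ℂ) -
          Complex.I * Complex.log (1 + Complex.exp y₁) :=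
      funext fun w => (d1 y₁ w y₃ hs1).deriv
    rw [hfun]
    have h0 : HasDerivAt (fun w : ℂ => 2 * y₁ - w) (-1) y₂ := by
      simpa using (hasDerivAt_id y₂).const_sub (2 * y₁)
    have ha : HasDerivAt (fun w : ℂ => Complex.I * (2 * y₁ - w)) (-Complex.I) y₂ := by
      have := h0.const_mul Complex.I
      refine this.congr_deriv ?_
      ring
    exact (ha.sub_const _).sub_const _
  · -- (1,3)
    have hfun : (fun w => deriv (fun z => pot z y₂ w) y₁) =
        fun _ => Complex.I * (2 * y₁ - y₂) - (π : ℂ) -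
          Complex.I * Complex.log (1 + Complex.exp y₁) :=
      funext fun w => (d1 y₁ y₂ w hs1).deriv
    rw [hfun]
    exact hasDerivAt_const _ _
  · -- (2,1)
    have hfun : (fun w => deriv (fun z => pot w z y₃) y₂) =
        fun w => Complex.I * (y₃ - w) + Complex.I * Complex.log (1 + Complex.exp y₂) :=
      funext fun w => (d2 w y₂ y₃ hs2).deriv
    rw [hfun]
    have h0 : HasDerivAt (fun w : ℂ => y₃ - w) (-1) y₁ := by
      simpa using (hasDerivAt_id y₁).const_sub y₃
    have ha : HasDerivAt (fun w : ℂ => Complex.I * (y₃ - w)) (-Complex.I) y₁ := by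
      have := h0.const_mul Complex.I
      refine this.congr_deriv ?_
      ring
    exact ha.add_const _
  · -- (2,2)
    have hev : ∀ᶠ w in nhds y₂, Real.sin w.im ≠ 0 := hopen.mem_nhds hs2
    have heq : (fun w => deriv (fun z => pot y₁ z y₃) w) =ᶠ[nhds y₂]
        (fun w => Complex.I * (y₃ - y₁) + Complex.I * Complex.log (1 + Complex.exp w)) := by
      filter_upwards [hev] with w hw
      exact (d2 y₁ w y₃ hw).deriv
    have hb := (log_one_add_exp_hasDerivAt y₂ hs2).const_mul Complex.I
    have hg := hb.const_add (Complex.I * (y₃ - y₁))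
    refine HasDerivAt.congr_of_eventuallyEq ?_ heq
    convert hg using 1
    rw [key_frac y₂ hs2]
    ring
  · -- (2,3)
    have hfun : (fun w => deriv (fun z => pot y₁ z w) y₂) =
        fun w => Complex.I * (w - y₁) + Complex.I * Complex.log (1 + Complex.exp y₂) :=
      funext fun w => (d2 y₁ y₂ w hs2).deriv
    rw [hfun]
    have h0 : HasDerivAt (fun w : ℂ => w - y₁) 1 y₃ := (hasDerivAt_id y₃).sub_const y₁
    have ha : HasDerivAt (fun w : ℂ => Complex.I * (w - y₁)) Complex.I y₃ := by
      have := h0.const_mul Complex.I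
      refine this.congr_deriv ?_
      ring
    exact ha.add_const _
  · -- (3,1)
    have hfun : (fun w => deriv (fun z => pot w y₂ z) y₃) =
        fun _ => Complex.I * (y₂ + y₃) + (π : ℂ) -
          3 * Complex.I * Complex.log (1 + Complex.exp y₃) :=
      funext fun w => (d3 w y₂ y₃ hs3).deriv
    rw [hfun]
    exact hasDerivAt_const _ _
  · -- (3,2)
    have hfun : (fun w => deriv (fun z => pot y₁ w z) y₃) =
        fun w => Complex.I * (w + y₃) + (π : ℂ) -
          3 * Complex.I * Complex.log (1 + Complex.exp y₃) :=
      funext fun w => (d3 y₁ w y₃ hs3).deriv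
    rw [hfun]
    have h0 : HasDerivAt (fun w : ℂ => w + y₃) 1 y₂ := (hasDerivAt_id y₂).add_const y₃
    have ha : HasDerivAt (fun w : ℂ => Complex.I * (w + y₃)) Complex.I y₂ := by
      have := h0.const_mul Complex.I
      refine this.congr_deriv ?_
      ring
    exact (ha.add_const _).sub_const _
  · -- (3,3)
    have hev : ∀ᶠ w in nhds y₃, Real.sin w.im ≠ 0 := hopen.mem_nhds hs3
    have heq : (fun w => deriv (fun z => pot y₁ y₂ z) w) =ᶠ[nhds y₃]
        (fun w => Complex.I * (y₂ + w) + (π : ℂ) -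
          3 * Complex.I * Complex.log (1 + Complex.exp w)) := by
      filter_upwards [hev] with w hw
      exact (d3 y₁ y₂ w hw).deriv
    have h0 : HasDerivAt (fun w : ℂ => y₂ + w) 1 y₃ := (hasDerivAt_id y₃).const_add y₂
    have ha : HasDerivAt (fun w : ℂ => Complex.I * (y₂ + w)) Complex.I y₃ := by
      have := h0.const_mul Complex.I
      refine this.congr_deriv ?_
      ring
    have hb := (log_one_add_exp_hasDerivAt y₃ hs3).const_mul (3 * Complex.I)
    have hg := (ha.add_const (π : ℂ)).sub hb
    refine HasDerivAt.congr_of_eventuallyEq ?_ heq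
    refine hg.congr_deriv ?_
    rw [key_frac y₃ hs3]
    ring
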